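/- Let n, p ≥ 1, let Σ be an n×n real diagonal matrix with strictly positive diagonal entries, and let A_1,…,A_p be real n×n matrices. Define A(z) = I − Σ_{k=1}^p A_k z^k (a complex-matrix-valued polynomial, viewing the real matrices as complex), the inverse spectral density G(ω) = A(e^{iω})ᴴ Σ⁻¹ A(e^{iω}) for ω ∈ ℝ, and the matrices W_0 = −Σ⁻¹ + Σ_{l=1}^p A_lᵀ Σ⁻¹ A_l and W_k = −2Σ⁻¹A_k + 2 Σ_{l=1}^{p−k} A_lᵀ Σ⁻¹ A_{l+k} for k = 1,…,p. Then for any indices i ≠ j, the (i,j) entry of G(ω) is zero for every ω ∈ ℝ if and only if (W_k)_{ij} = 0 and (W_k)_{ji} = 0 for all k = 0,1,…,p. -/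

import Mathlib

open Matrix MeasureTheory BigOperators
open Finset

lemma ar_three_split (p : ℕ) (hp : 1 ≤ p) (F : ℕ → ℂ) :
    ∑ q ∈ Finset.range (2*p+1), F q =
      (∑ t ∈ Finset.Icc 1 p, F (p - t)) + F p + ∑ t ∈ Finset.Icc 1 p, F (p + t) := by
  have h1 : ∑ t ∈ Finset.Icc 1 p, F (p - t) = ∑ q ∈ Finset.range p, F q := by
    apply Finset.sum_nbij' (fun t => p - t) (fun q => p - q)
    · intro a ha; simp only [mem_Icc] at ha; simp only [mem_range]; omega
    · intro a ha; simp only [mem_range] at ha; simp only [mem_Icc]; omega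
    · intro a ha; simp only [mem_Icc] at ha; omega
    · intro a ha; simp only [mem_range] at ha; omega
    · intro a ha; rfl
  have h2 : ∑ t ∈ Finset.Icc 1 p, F (p + t) = ∑ q ∈ Finset.Ico (p+1) (2*p+1), F q := by
    apply Finset.sum_nbij' (fun t => p + t) (fun q => q - p)
    · intro a ha; simp only [mem_Icc] at ha; simp only [mem_Ico]; omega
    · intro a ha; simp only [mem_Ico] at ha; simp only [mem_Icc]; omega
    · intro a ha; simp only [mem_Icc] at ha; omega
    · intro a ha; simp only [mem_Ico] at ha; omega
    · intro a ha; rfl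
  rw [h1, h2]
  rw [Finset.range_eq_Ico, ← Finset.sum_Ico_consecutive F (Nat.zero_le (p+1)) (by omega)]
  rw [← Finset.range_eq_Ico, Finset.sum_range_succ]

lemma ar_diag_decomp (p : ℕ) (g : ℕ → ℕ → ℂ) :
    ∑ k ∈ Finset.Icc 1 p, ∑ l ∈ Finset.Icc 1 p, g k l =
      (∑ t ∈ Finset.Icc 1 p, ∑ l ∈ Finset.Icc 1 (p-t), g (l+t) l)
      + (∑ k ∈ Finset.Icc 1 p, g k k)
      + ∑ t ∈ Finset.Icc 1 p, ∑ k ∈ Finset.Icc 1 (p-t), g k (k+t) := by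
  rw [← Finset.sum_product']
  have hA : ∑ x ∈ (Finset.Icc 1 p ×ˢ Finset.Icc 1 p).filter (fun x => x.1 < x.2),
      g x.1 x.2 = ∑ t ∈ Finset.Icc 1 p, ∑ k ∈ Finset.Icc 1 (p-t), g k (k+t) := by
    rw [Finset.sum_sigma' (Finset.Icc 1 p) (fun t => Finset.Icc 1 (p-t)) (fun t k => g k (k+t))]
    apply Finset.sum_nbij' (fun x => (⟨x.2 - x.1, x.1⟩ : Σ _ : ℕ, ℕ)) (fun y => (y.2, y.2 + y.1))
    · rintro ⟨a, b⟩ ha; simp only [mem_filter, mem_product, mem_Icc] at ha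
      simp only [Finset.mem_sigma, mem_Icc]; omega
    · rintro ⟨t, k⟩ ha; simp only [Finset.mem_sigma, mem_Icc] at ha
      simp only [mem_filter, mem_product, mem_Icc, eq_self_iff_true, true_and, and_true]; omega
    · rintro ⟨a, b⟩ ha; simp only [mem_filter, mem_product, mem_Icc] at ha
      simp only [Prod.mk.injEq, eq_self_iff_true, true_and, and_true]; omega
    · rintro ⟨t, k⟩ ha; simp only [Finset.mem_sigma, mem_Icc] at ha
      refine Sigma.ext ?_ (heq_of_eq ?_) <;> simp <;> omega
    · rintro ⟨a, b⟩ ha; simp only [mem_filter, mem_product, mem_Icc] at ha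
      show g a b = g a (a + (b - a)); congr 1; omega
  have hB : ∑ x ∈ (Finset.Icc 1 p ×ˢ Finset.Icc 1 p).filter (fun x => x.2 < x.1),
      g x.1 x.2 = ∑ t ∈ Finset.Icc 1 p, ∑ l ∈ Finset.Icc 1 (p-t), g (l+t) l := by
    rw [Finset.sum_sigma' (Finset.Icc 1 p) (fun t => Finset.Icc 1 (p-t)) (fun t l => g (l+t) l)]
    apply Finset.sum_nbij' (fun x => (⟨x.1 - x.2, x.2⟩ : Σ _ : ℕ, ℕ)) (fun y => (y.2 + y.1, y.2))
    · rintro ⟨a, b⟩ ha; simp only [mem_filter, mem_product, mem_Icc] at ha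
      simp only [Finset.mem_sigma, mem_Icc]; omega
    · rintro ⟨t, l⟩ ha; simp only [Finset.mem_sigma, mem_Icc] at ha
      simp only [mem_filter, mem_product, mem_Icc, eq_self_iff_true, true_and, and_true]; omega
    · rintro ⟨a, b⟩ ha; simp only [mem_filter, mem_product, mem_Icc] at ha
      simp only [Prod.mk.injEq, eq_self_iff_true, true_and, and_true]; omega
    · rintro ⟨t, l⟩ ha; simp only [Finset.mem_sigma, mem_Icc] at ha
      refine Sigma.ext ?_ (heq_of_eq ?_) <;> simp <;> omega
    · rintro ⟨a, b⟩ ha; simp only [mem_filter, mem_product, mem_Icc] at ha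
      show g a b = g (b + (a - b)) b; congr 1; omega
  have hD : ∑ x ∈ (Finset.Icc 1 p ×ˢ Finset.Icc 1 p).filter (fun x => x.1 = x.2),
      g x.1 x.2 = ∑ k ∈ Finset.Icc 1 p, g k k := by
    apply Finset.sum_nbij' (fun x => x.1) (fun k => (k, k))
    · rintro ⟨a, b⟩ ha; simp only [mem_filter, mem_product, mem_Icc] at ha
      simp only [mem_Icc]; omega
    · intro a ha; simp only [mem_Icc] at ha
      simp only [mem_filter, mem_product, mem_Icc, eq_self_iff_true, true_and, and_true]; omega
    · rintro ⟨a, b⟩ ha; simp only [mem_filter, mem_product, mem_Icc] at ha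
      simp only [Prod.mk.injEq, eq_self_iff_true, true_and, and_true]; omega
    · intro a ha; rfl
    · rintro ⟨a, b⟩ ha; simp only [mem_filter, mem_product, mem_Icc] at ha
      show g a b = g a a; congr 1; omega
  have key := Finset.sum_filter_add_sum_filter_not
    (Finset.Icc 1 p ×ˢ Finset.Icc 1 p) (fun x => x.1 < x.2) (fun x => g x.1 x.2)
  have key2 := Finset.sum_filter_add_sum_filter_not
    (((Finset.Icc 1 p ×ˢ Finset.Icc 1 p)).filter (fun x => ¬ x.1 < x.2))
    (fun x => x.1 = x.2) (fun x => g x.1 x.2)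
  have e1 : ((Finset.Icc 1 p ×ˢ Finset.Icc 1 p).filter (fun x => ¬ x.1 < x.2)).filter
      (fun x => x.1 = x.2) = (Finset.Icc 1 p ×ˢ Finset.Icc 1 p).filter (fun x => x.1 = x.2) := by
    rw [Finset.filter_filter]; apply Finset.filter_congr; intro x _
    constructor
    · rintro ⟨-, h⟩; exact h
    · intro h; exact ⟨by omega, h⟩
  have e2 : ((Finset.Icc 1 p ×ˢ Finset.Icc 1 p).filter (fun x => ¬ x.1 < x.2)).filter
      (fun x => ¬ x.1 = x.2) = (Finset.Icc 1 p ×ˢ Finset.Icc 1 p).filter (fun x => x.2 < x.1) := by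
    rw [Finset.filter_filter]; apply Finset.filter_congr; intro x _
    constructor
    · rintro ⟨h1, h2⟩; omega
    · intro h; constructor <;> omega
  rw [e1, e2] at key2
  rw [← key, ← key2, hA, hB, hD]
  ring

lemma ar_trig_poly_zero (N : ℕ) (c : ℕ → ℂ)
    (h : ∀ ω : ℝ, ∑ q ∈ Finset.range N, c q * Complex.exp (Complex.I * (ω:ℂ)) ^ q = 0) :
    ∀ q, q < N → c q = 0 := by
  set P : Polynomial ℂ := ∑ q ∈ Finset.range N, Polynomial.C (c q) * Polynomial.X ^ q with hP
  have hev : ∀ ω : ℝ, P.eval (Complex.exp (Complex.I * (ω:ℂ))) = 0 := by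
    intro ω
    rw [hP, Polynomial.eval_finset_sum]
    simpa using h ω
  have hPz : P = 0 := by
    apply Polynomial.eq_zero_of_infinite_isRoot
    apply Set.Infinite.mono
      (s := (fun ω : ℝ => Complex.exp (Complex.I * (ω:ℂ))) '' Set.Ioo 0 1)
    · rintro x ⟨ω, -, rfl⟩; exact hev ω
    · apply Set.Infinite.image
      · intro a ha b hb hab
        simp only [Set.mem_Ioo] at ha hb
        rw [Complex.exp_eq_exp_iff_exists_int] at hab
        obtain ⟨k, hk⟩ := hab
        have hk' : Complex.I * (a:ℂ) = Complex.I * ((b:ℂ) + (k:ℂ) * (2 * (Real.pi:ℂ))) := by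
          rw [hk]; ring
        have h2 : (a:ℂ) = (b:ℂ) + (k:ℂ) * (2 * (Real.pi:ℂ)) :=
          mul_left_cancel₀ Complex.I_ne_zero hk'
        have him : a = b + (k:ℝ) * (2 * Real.pi) := by exact_mod_cast h2
        have hπ := Real.pi_gt_three
        have hk0 : k = 0 := by
          rcases lt_trichotomy k 0 with hlt | heq | hgt
          · have : (k:ℝ) ≤ -1 := by exact_mod_cast Int.le_sub_one_of_lt hlt
            nlinarith
          · exact heq
          · have : (1:ℝ) ≤ (k:ℝ) := by exact_mod_cast hgt
            nlinarith
        rw [hk0] at him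
        push_cast at him
        linarith
      · exact Set.Ioo_infinite (by norm_num)
  intro q hq
  have : P.coeff q = c q := by
    rw [hP]
    rw [Polynomial.finset_sum_coeff]
    simp only [Polynomial.coeff_C_mul, Polynomial.coeff_X_pow, mul_ite, mul_one, mul_zero]
    rw [Finset.sum_ite_eq (Finset.range N) q c]
    simp [hq]
  rw [hPz] at this
  simpa using this.symm

lemma ar_delta_expand {n : ℕ} (i j : Fin n) (hij : i ≠ j) (P Q vv : Fin n → ℂ) :
    ∑ x, ((if x = i then (1:ℂ) else 0) - P x) * (vv x * ((if x = j then (1:ℂ) else 0) - Q x))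
    = 0 - (vv i * Q i) - (P j * vv j) + ∑ x, P x * (vv x * Q x) := by
  have he : ∀ x : Fin n, ((if x = i then (1:ℂ) else 0) - P x)
      * (vv x * ((if x = j then (1:ℂ) else 0) - Q x))
      = (if x = i then (vv x * (if x = j then (1:ℂ) else 0)) else 0)
        - (if x = i then vv x * Q x else 0)
        - (if x = j then P x * vv x else 0)
        + P x * (vv x * Q x) := by
    intro x
    by_cases h1 : x = i <;> by_cases h2 : x = j <;> simp [h1, h2, hij, Ne.symm hij] <;> ring
  rw [Finset.sum_congr rfl (fun x _ => he x)]
  simp only [Finset.sum_add_distrib, Finset.sum_sub_distrib]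
  rw [Finset.sum_ite_eq' Finset.univ i (fun x => vv x * (if x = j then (1:ℂ) else 0))]
  rw [Finset.sum_ite_eq' Finset.univ i (fun x => vv x * Q x)]
  rw [Finset.sum_ite_eq' Finset.univ j (fun x => P x * vv x)]
  simp [hij]

lemma ar_quartic {n : ℕ} (p : ℕ) (z : ℂ) (a b : ℕ → Fin n → ℂ) (vv : Fin n → ℂ) :
    ∑ x, (∑ k ∈ Finset.Icc 1 p, (z⁻¹)^k * a k x)
      * (vv x * (∑ l ∈ Finset.Icc 1 p, z^l * b l x))
    = ∑ k ∈ Finset.Icc 1 p, ∑ l ∈ Finset.Icc 1 p,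
        ((z⁻¹)^k * z^l) * ∑ x, a k x * (vv x * b l x) := by
  have he : ∀ x : Fin n, (∑ k ∈ Finset.Icc 1 p, (z⁻¹)^k * a k x)
      * (vv x * (∑ l ∈ Finset.Icc 1 p, z^l * b l x))
      = ∑ k ∈ Finset.Icc 1 p, ∑ l ∈ Finset.Icc 1 p,
          ((z⁻¹)^k * z^l) * (a k x * (vv x * b l x)) := by
    intro x
    rw [Finset.sum_mul]
    apply Finset.sum_congr rfl; intro k _
    rw [Finset.mul_sum, Finset.mul_sum]
    apply Finset.sum_congr rfl; intro l _
    ring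
  rw [Finset.sum_congr rfl (fun x _ => he x), Finset.sum_comm]
  apply Finset.sum_congr rfl; intro k _
  rw [Finset.sum_comm]
  apply Finset.sum_congr rfl; intro l _
  rw [Finset.mul_sum]
lemma ar_central (p : ℕ) (z : ℂ) (hz : z ≠ 0) (u v : ℕ → ℂ) (f : ℕ → ℕ → ℂ) :
    z^p * ((0:ℂ) - (∑ l ∈ Finset.Icc 1 p, z^l * u l)
        - (∑ k ∈ Finset.Icc 1 p, (z⁻¹)^k * v k)
        + ∑ k ∈ Finset.Icc 1 p, ∑ l ∈ Finset.Icc 1 p, ((z⁻¹)^k * z^l) * f k l)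
    = (∑ t ∈ Finset.Icc 1 p, (-(v t) + ∑ l ∈ Finset.Icc 1 (p-t), f (l+t) l) * z^(p-t))
      + (∑ k ∈ Finset.Icc 1 p, f k k) * z^p
      + ∑ t ∈ Finset.Icc 1 p, (-(u t) + ∑ k ∈ Finset.Icc 1 (p-t), f k (k+t)) * z^(p+t) := by
  have hzp : ∀ k, k ≤ p → z^p * (z⁻¹)^k = z^(p-k) := by
    intro k hk
    have h1 : z^(p-k) * z^k = z^p := by rw [← pow_add]; congr 1; omega
    rw [inv_pow, ← h1, mul_inv_cancel_right₀ (pow_ne_zero k hz)]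
  -- expand LHS
  rw [mul_add, mul_sub, mul_sub, mul_zero, Finset.mul_sum, Finset.mul_sum]
  have e1 : ∑ l ∈ Finset.Icc 1 p, z^p * (z^l * u l)
      = ∑ l ∈ Finset.Icc 1 p, u l * z^(p+l) := by
    apply Finset.sum_congr rfl; intro l _; rw [pow_add]; ring
  have e2 : ∑ k ∈ Finset.Icc 1 p, z^p * ((z⁻¹)^k * v k)
      = ∑ k ∈ Finset.Icc 1 p, v k * z^(p-k) := by
    apply Finset.sum_congr rfl; intro k hk; simp only [mem_Icc] at hk
    rw [← mul_assoc, hzp k hk.2]; ring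
  have e3 : z^p * ∑ k ∈ Finset.Icc 1 p, ∑ l ∈ Finset.Icc 1 p, ((z⁻¹)^k * z^l) * f k l
      = ∑ k ∈ Finset.Icc 1 p, ∑ l ∈ Finset.Icc 1 p,
          (fun k l => z^p * ((z⁻¹)^k * z^l) * f k l) k l := by
    rw [Finset.mul_sum]
    apply Finset.sum_congr rfl; intro k _; rw [Finset.mul_sum]
    apply Finset.sum_congr rfl; intro l _; ring
  rw [e1, e2, e3, ar_diag_decomp p (fun k l => z^p * ((z⁻¹)^k * z^l) * f k l)]
  have e4 : ∑ t ∈ Finset.Icc 1 p, ∑ l ∈ Finset.Icc 1 (p-t),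
      z^p * ((z⁻¹)^(l+t) * z^l) * f (l+t) l
      = ∑ t ∈ Finset.Icc 1 p, (∑ l ∈ Finset.Icc 1 (p-t), f (l+t) l) * z^(p-t) := by
    apply Finset.sum_congr rfl; intro t ht; simp only [mem_Icc] at ht
    rw [Finset.sum_mul]
    apply Finset.sum_congr rfl; intro l hl; simp only [mem_Icc] at hl
    have hlt : l + t ≤ p := by omega
    calc z^p * ((z⁻¹)^(l+t) * z^l) * f (l+t) l
        = (z^p * (z⁻¹)^(l+t)) * z^l * f (l+t) l := by ring
      _ = z^(p-(l+t)) * z^l * f (l+t) l := by rw [hzp _ hlt]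
      _ = f (l+t) l * z^(p-t) := by
          rw [← pow_add]
          have : p - (l+t) + l = p - t := by omega
          rw [this]; ring
  have e5 : ∑ k ∈ Finset.Icc 1 p, z^p * ((z⁻¹)^k * z^k) * f k k
      = (∑ k ∈ Finset.Icc 1 p, f k k) * z^p := by
    rw [Finset.sum_mul]
    apply Finset.sum_congr rfl; intro k _
    rw [inv_pow, inv_mul_cancel₀ (pow_ne_zero k hz)]; ring
  have e6 : ∑ t ∈ Finset.Icc 1 p, ∑ k ∈ Finset.Icc 1 (p-t),
      z^p * ((z⁻¹)^k * z^(k+t)) * f k (k+t)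
      = ∑ t ∈ Finset.Icc 1 p, (∑ k ∈ Finset.Icc 1 (p-t), f k (k+t)) * z^(p+t) := by
    apply Finset.sum_congr rfl; intro t ht
    rw [Finset.sum_mul]
    apply Finset.sum_congr rfl; intro k hk
    rw [pow_add, pow_add, inv_pow]
    field_simp
  rw [e4, e5, e6]
  simp only [add_mul, neg_mul, Finset.sum_add_distrib, Finset.sum_neg_distrib]
  ring
/-- Partial-correlation constraints of a vector AR(p) process: for `i ≠ j`, the `(i,j)` entry of
the inverse spectral density `G(ω) = A(e^{iω})ᴴ Σ⁻¹ A(e^{iω})` vanishes for all `ω` iff the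
`(i,j)` and `(j,i)` entries of the matrices `W_0, …, W_p` vanish. -/
theorem stmt_0 (n p : ℕ) (hn : 1 ≤ n) (hp : 1 ≤ p)
    (d : Fin n → ℝ) (hd : ∀ i, 0 < d i)
    (A : ℕ → Matrix (Fin n) (Fin n) ℝ)
    (G : ℝ → Matrix (Fin n) (Fin n) ℂ)
    (hG : ∀ ω : ℝ,
      G ω =
        (1 - ∑ k ∈ Finset.Icc 1 p,
            Complex.exp (Complex.I * (ω : ℂ)) ^ k • (A k).map (Complex.ofReal))ᴴ
          * ((Matrix.diagonal d)⁻¹).map (Complex.ofReal)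
          * (1 - ∑ k ∈ Finset.Icc 1 p,
            Complex.exp (Complex.I * (ω : ℂ)) ^ k • (A k).map (Complex.ofReal)))
    (W : ℕ → Matrix (Fin n) (Fin n) ℝ)
    (hW0 : W 0 = -(Matrix.diagonal d)⁻¹
        + ∑ l ∈ Finset.Icc 1 p, (A l)ᵀ * (Matrix.diagonal d)⁻¹ * A l)
    (hWk : ∀ k, 1 ≤ k → k ≤ p →
      W k = (-2 : ℝ) • ((Matrix.diagonal d)⁻¹ * A k)
        + (2 : ℝ) • ∑ l ∈ Finset.Icc 1 (p - k), (A l)ᵀ * (Matrix.diagonal d)⁻¹ * A (l + k))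
    (i j : Fin n) (hij : i ≠ j) :
    (∀ ω : ℝ, G ω i j = 0) ↔ (∀ k ≤ p, W k i j = 0 ∧ W k j i = 0) := by
  classical
  -- diagonal inverse
  have hDinv : (Matrix.diagonal d)⁻¹ = Matrix.diagonal (fun m => (d m)⁻¹) := by
    apply Matrix.inv_eq_right_inv
    rw [Matrix.diagonal_mul_diagonal]
    have : (fun m => d m * (d m)⁻¹) = fun _ => (1:ℝ) :=
      funext fun m => mul_inv_cancel₀ (hd m).ne'
    rw [this, Matrix.diagonal_one]
  -- the real coefficient data
  set f : ℕ → ℕ → ℝ := fun k l => ∑ m, (A k) m i * (d m)⁻¹ * (A l) m j with hf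
  set c : ℕ → ℝ := fun q =>
    if q < p then W (p - q) j i / 2 else if q = p then W 0 i j else W (q - p) i j / 2 with hc
  -- entries of the W matrices
  have hADA : ∀ k l : ℕ, ∀ a b : Fin n,
      ((A k)ᵀ * (Matrix.diagonal d)⁻¹ * A l) a b
        = ∑ m, (A k) m a * (d m)⁻¹ * (A l) m b := by
    intro k l a b
    rw [hDinv, Matrix.mul_assoc, Matrix.mul_apply]
    apply Finset.sum_congr rfl
    intro m _
    rw [Matrix.transpose_apply, Matrix.diagonal_mul]
    ring
  have hd0 : (Matrix.diagonal d)⁻¹ i j = 0 := by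
    rw [hDinv]; exact Matrix.diagonal_apply_ne _ hij
  have hd0' : (Matrix.diagonal d)⁻¹ j i = 0 := by
    rw [hDinv]; exact Matrix.diagonal_apply_ne _ (Ne.symm hij)
  have hdm : ∀ k : ℕ, ∀ a b : Fin n, ((Matrix.diagonal d)⁻¹ * A k) a b = (d a)⁻¹ * A k a b := by
    intro k a b; rw [hDinv, Matrix.diagonal_mul]
  have hW0ij : W 0 i j = ∑ k ∈ Finset.Icc 1 p, f k k := by
    rw [hW0, Matrix.add_apply, Matrix.neg_apply, hd0, Matrix.sum_apply]
    rw [neg_zero, zero_add]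
    exact Finset.sum_congr rfl fun k _ => hADA k k i j
  have hW0ji : W 0 j i = ∑ k ∈ Finset.Icc 1 p, f k k := by
    rw [hW0, Matrix.add_apply, Matrix.neg_apply, hd0', Matrix.sum_apply]
    rw [neg_zero, zero_add]
    refine Finset.sum_congr rfl fun k _ => ?_
    rw [hADA k k j i]
    exact Finset.sum_congr rfl fun m _ => by ring
  have hWkij : ∀ k, 1 ≤ k → k ≤ p →
      W k i j = -2*((d i)⁻¹*(A k) i j) + 2*∑ l ∈ Finset.Icc 1 (p-k), f l (l+k) := by
    intro k h1 h2
    rw [hWk k h1 h2, Matrix.add_apply, Matrix.smul_apply, Matrix.smul_apply,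
      hdm, Matrix.sum_apply]
    rw [smul_eq_mul, smul_eq_mul]
    congr 1
    congr 1
    exact Finset.sum_congr rfl fun l _ => hADA l (l+k) i j
  have hWkji : ∀ k, 1 ≤ k → k ≤ p →
      W k j i = -2*((d j)⁻¹*(A k) j i) + 2*∑ l ∈ Finset.Icc 1 (p-k), f (l+k) l := by
    intro k h1 h2
    rw [hWk k h1 h2, Matrix.add_apply, Matrix.smul_apply, Matrix.smul_apply,
      hdm, Matrix.sum_apply]
    rw [smul_eq_mul, smul_eq_mul]
    congr 1
    congr 1
    refine Finset.sum_congr rfl fun l _ => ?_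
    rw [hADA l (l+k) j i]
    exact Finset.sum_congr rfl fun m _ => by ring
  -- the key identity
  have KEY : ∀ ω : ℝ, Complex.exp (Complex.I*(ω:ℂ))^p * G ω i j
      = ∑ q ∈ Finset.range (2*p+1), (c q : ℂ) * Complex.exp (Complex.I*(ω:ℂ))^q := by
    intro ω
    set z := Complex.exp (Complex.I*(ω:ℂ)) with hzdef
    have hz : z ≠ 0 := Complex.exp_ne_zero _
    have hconj : (starRingEnd ℂ) z = z⁻¹ := by
      rw [hzdef, ← Complex.exp_conj, ← Complex.exp_neg]
      congr 1
      simp [Complex.ext_iff]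
    -- entries of B
    have hB : ∀ x y : Fin n,
        (1 - ∑ k ∈ Finset.Icc 1 p, z ^ k • (A k).map (Complex.ofReal)) x y
        = (if x = y then (1:ℂ) else 0) - ∑ k ∈ Finset.Icc 1 p, z^k * ((A k) x y : ℂ) := by
      intro x y
      simp [Matrix.sub_apply, Matrix.one_apply, Matrix.sum_apply, Matrix.smul_apply,
        Matrix.map_apply, smul_eq_mul]
    have hBc : ∀ x y : Fin n,
        star ((1 - ∑ k ∈ Finset.Icc 1 p, z ^ k • (A k).map (Complex.ofReal)) x y)
        = (if x = y then (1:ℂ) else 0) - ∑ k ∈ Finset.Icc 1 p, (z⁻¹)^k * ((A k) x y : ℂ) := by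
      intro x y
      rw [RCLike.star_def, hB, _root_.map_sub, _root_.map_sum]
      congr 1
      · split <;> simp
      · refine Finset.sum_congr rfl fun k _ => ?_
        rw [_root_.map_mul, _root_.map_pow, hconj, Complex.conj_ofReal]
    -- entry expansion of G
    have hGe : G ω i j = (0:ℂ)
        - (((d i)⁻¹:ℝ) * ∑ l ∈ Finset.Icc 1 p, z^l * ((A l) i j : ℂ))
        - ((∑ k ∈ Finset.Icc 1 p, (z⁻¹)^k * ((A k) j i : ℂ)) * ((d j)⁻¹:ℝ))
        + ∑ k ∈ Finset.Icc 1 p, ∑ l ∈ Finset.Icc 1 p,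
            ((z⁻¹)^k * z^l) * ((f k l : ℝ) : ℂ) := by
      rw [hG ω, hDinv, Matrix.diagonal_map (by simp), Matrix.mul_assoc, Matrix.mul_apply]
      have hstep : ∀ x : Fin n,
          ((1 - ∑ k ∈ Finset.Icc 1 p, z ^ k • (A k).map (Complex.ofReal))ᴴ i x)
          * ((Matrix.diagonal (fun m => (((d m)⁻¹ : ℝ) : ℂ))
              * (1 - ∑ k ∈ Finset.Icc 1 p, z ^ k • (A k).map (Complex.ofReal))) x j)
          = ((if x = i then (1:ℂ) else 0) - ∑ k ∈ Finset.Icc 1 p, (z⁻¹)^k * ((A k) x i : ℂ))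
            * ((((d x)⁻¹:ℝ):ℂ) * ((if x = j then (1:ℂ) else 0)
                - ∑ l ∈ Finset.Icc 1 p, z^l * ((A l) x j : ℂ))) := by
        intro x
        rw [Matrix.conjTranspose_apply, hBc, Matrix.diagonal_mul, hB]
      rw [Finset.sum_congr rfl fun x _ => hstep x]
      rw [ar_delta_expand i j hij (fun x => ∑ k ∈ Finset.Icc 1 p, (z⁻¹)^k * ((A k) x i : ℂ))
        (fun x => ∑ l ∈ Finset.Icc 1 p, z^l * ((A l) x j : ℂ)) (fun x => (((d x)⁻¹:ℝ):ℂ))]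
      rw [ar_quartic p z (fun k x => ((A k) x i : ℂ)) (fun l x => ((A l) x j : ℂ))
        (fun x => (((d x)⁻¹:ℝ):ℂ))]
      congr 1
      refine Finset.sum_congr rfl fun k _ => Finset.sum_congr rfl fun l _ => ?_
      congr 1
      rw [hf]
      push_cast
      exact Finset.sum_congr rfl fun m _ => by ring
    have hu : ((d i)⁻¹:ℝ) * ∑ l ∈ Finset.Icc 1 p, z^l * ((A l) i j : ℂ)
        = ∑ l ∈ Finset.Icc 1 p, z^l * (((d i)⁻¹*(A l) i j : ℝ) : ℂ) := by
      rw [Finset.mul_sum]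
      refine Finset.sum_congr rfl fun l _ => ?_
      push_cast; ring
    have hv : (∑ k ∈ Finset.Icc 1 p, (z⁻¹)^k * ((A k) j i : ℂ)) * ((d j)⁻¹:ℝ)
        = ∑ k ∈ Finset.Icc 1 p, (z⁻¹)^k * (((d j)⁻¹*(A k) j i : ℝ) : ℂ) := by
      rw [Finset.sum_mul]
      refine Finset.sum_congr rfl fun k _ => ?_
      push_cast; ring
    rw [hGe, hu, hv,
      ar_central p z hz (fun l => (((d i)⁻¹*(A l) i j : ℝ) : ℂ))
        (fun k => (((d j)⁻¹*(A k) j i : ℝ) : ℂ)) (fun k l => ((f k l : ℝ) : ℂ)),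
      ar_three_split p hp (fun q => (c q : ℂ) * z^q)]
    congr 1
    congr 1
    · refine Finset.sum_congr rfl fun t ht => ?_
      simp only [Finset.mem_Icc] at ht
      congr 1
      have h1 : p - t < p := by omega
      have h2 : p - (p - t) = t := by omega
      have hcv : c (p - t) = W t j i / 2 := by rw [hc]; simp only [if_pos h1, h2]
      rw [hcv, hWkji t ht.1 ht.2]
      push_cast
      ring
    · congr 1
      have hcv : c p = W 0 i j := by rw [hc]; simp
      rw [hcv, hW0ij]
      push_cast
      rfl
    · refine Finset.sum_congr rfl fun t ht => ?_
      simp only [Finset.mem_Icc] at ht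
      congr 1
      have h1 : ¬ (p + t < p) := by omega
      have h2 : ¬ (p + t = p) := by omega
      have h3 : p + t - p = t := by omega
      have hcv : c (p + t) = W t i j / 2 := by
        rw [hc]; simp only [if_neg h1, if_neg h2, h3]
      rw [hcv, hWkij t ht.1 ht.2]
      push_cast
      ring
  -- conclude
  constructor
  · intro h0 k hk
    have hc0 : ∀ q, q < 2*p+1 → c q = 0 := by
      intro q hq
      have := ar_trig_poly_zero (2*p+1) (fun q => (c q : ℂ))
        (fun ω => by rw [← KEY ω, h0 ω, mul_zero]) q hq
      exact_mod_cast this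
    rcases Nat.eq_zero_or_pos k with h | h
    · subst h
      constructor
      · have := hc0 p (by omega)
        rw [hc] at this
        simpa using this
      · rw [hW0ji, ← hW0ij]
        have := hc0 p (by omega)
        rw [hc] at this
        simpa using this
    · constructor
      · have := hc0 (p + k) (by omega)
        rw [hc] at this
        simp only [if_neg (by omega : ¬ (p + k < p)), if_neg (by omega : ¬ (p + k = p)),
          (by omega : p + k - p = k)] at this
        linarith
      · have := hc0 (p - k) (by omega)
        rw [hc] at this
        simp only [if_pos (by omega : p - k < p), (by omega : p - (p - k) = k)] at this
        linarith
  · intro hW ω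
    have hall : ∀ q ∈ Finset.range (2*p+1), (c q : ℂ) * Complex.exp (Complex.I*(ω:ℂ))^q = 0 := by
      intro q hq
      rw [Finset.mem_range] at hq
      have hcq : c q = 0 := by
        rw [hc]
        by_cases h1 : q < p
        · simp only [if_pos h1]
          rw [(hW (p - q) (by omega)).2]
          norm_num
        · by_cases h2 : q = p
          · simp only [if_neg h1, if_pos h2]
            exact (hW 0 (by omega)).1
          · simp only [if_neg h1, if_neg h2]
            rw [(hW (q - p) (by omega)).1]
            norm_num
      rw [hcq, Complex.ofReal_zero, zero_mul]
    have h1 := KEY ω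
    rw [Finset.sum_eq_zero hall] at h1
    exact (mul_eq_zero.1 h1).resolve_left (pow_ne_zero _ (Complex.exp_ne_zero _))
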